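/- Let (X, x_0) be a based metric space and Φ a symmetric norm. Then the set S_Φ(X, x_0) of Φ-summable countable multisets in (X, x_0), with d_Φ(S, T) := inf over pairs of enumerations (s_i), (t_i) of Φ(d(s_1,t_1), d(s_2,t_2), ...), is a metric space. -/

import Mathlib

open Filter

/-- A symmetric norm: a norm on the space `c_00` of finitely supported real
sequences (modelled as `ℕ →₀ ℝ`), normalised by `Φ(1,0,0,…) = 1`, and invariant
under permutations of the entries and under replacing entries by their absolute
values. -/
structure SymmetricNorm where
  toFun : (ℕ →₀ ℝ) → ℝ
  nonneg : ∀ ξ, 0 ≤ toFun ξ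
  eq_zero : ∀ ξ, toFun ξ = 0 → ξ = 0
  add_le : ∀ ξ η, toFun (ξ + η) ≤ toFun ξ + toFun η
  smul_eq : ∀ (c : ℝ) (ξ), toFun (c • ξ) = |c| * toFun ξ
  norm_single : toFun (Finsupp.single 0 1) = 1
  perm_invariant : ∀ (π : Equiv.Perm ℕ) (ξ), toFun (Finsupp.equivMapDomain π ξ) = toFun ξ
  abs_invariant : ∀ (ξ : ℕ →₀ ℝ), toFun (Finsupp.mapRange (fun a => |a|) abs_zero ξ) = toFun ξ

/-- The truncation `(ξ_0, …, ξ_{n-1}, 0, 0, …)` of a sequence, as an element of `c_00`. -/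
noncomputable def truncF (ξ : ℕ → ℝ) (n : ℕ) : ℕ →₀ ℝ :=
  ∑ i ∈ Finset.range n, Finsupp.single i (ξ i)

/-- The extension of a symmetric norm to sequences: `Φ(ξ) = lim_n Φ(ξ_0,…,ξ_{n-1},0,0,…)`. -/
noncomputable def SymmetricNorm.ext (Φ : SymmetricNorm) (ξ : ℕ → ℝ) : ℝ :=
  limUnder atTop fun n => Φ.toFun (truncF ξ n)

/-- Membership in the natural domain `ℓ_Φ`: the sequence tends to `0` and the
`Φ`-norms of its truncations converge. -/
def MemLPhi (Φ : SymmetricNorm) (ξ : ℕ → ℝ) : Prop :=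
  Tendsto ξ atTop (nhds 0) ∧ ∃ L, Tendsto (fun n => Φ.toFun (truncF ξ n)) atTop (nhds L)

/-- Membership in `ℓ_Φ^+`: nonnegative `Φ`-summable sequences. -/
def MemLPhiPlus (Φ : SymmetricNorm) (ξ : ℕ → ℝ) : Prop :=
  (∀ i, 0 ≤ ξ i) ∧ MemLPhi Φ ξ

/-- A symmetric norm is regular if `Φ(ξ_{n+1}, ξ_{n+2}, …) → 0` for every `ξ ∈ ℓ_Φ`. -/
def SymmetricNorm.Regular (Φ : SymmetricNorm) : Prop :=
  ∀ ξ : ℕ → ℝ, MemLPhi Φ ξ →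
    Tendsto (fun n => Φ.ext fun i => ξ (n + i)) atTop (nhds 0)

/-- `partialMax ξ k` is the supremum of sums of `k` distinct entries of `ξ`;
for nonnegative `ξ ∈ c_0` this equals `ξ^↓_1 + ⋯ + ξ^↓_k`. -/
noncomputable def partialMax (ξ : ℕ → ℝ) (k : ℕ) : ℝ :=
  sSup ((fun s : Finset ℕ => ∑ i ∈ s, ξ i) '' {s | s.card = k})

/-- The nonincreasing rearrangement `ξ^↓` of a (nonnegative, null) sequence,
defined via `ξ^↓_1 = max ξ_i`, `ξ^↓_1 + ξ^↓_2 = max_{i ≠ j} (ξ_i + ξ_j)`, …. -/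
noncomputable def decRearr (ξ : ℕ → ℝ) (k : ℕ) : ℝ :=
  partialMax ξ (k + 1) - partialMax ξ k
open scoped Classical

variable {X : Type*} [MetricSpace X]

/-- `s : ℕ → X` is an enumeration of the countable multiset `S` in `(X, x₀)`:
every point other than the basepoint occurs in `s` exactly according to its
multiplicity in `S`. -/
def IsEnum (x0 : X) (S : X → ℕ∞) (s : ℕ → X) : Prop :=
  ∀ x, x ≠ x0 → S x = {i : ℕ | s i = x}.encard

/-- A countable multiset in `(X, x₀)`: a multiplicity function in which the
basepoint is the only point of infinite multiplicity and whose support is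
countable. -/
def IsCMultiset (x0 : X) (S : X → ℕ∞) : Prop :=
  S x0 = ⊤ ∧ (∀ x, x ≠ x0 → S x ≠ ⊤) ∧ {x | S x ≠ 0}.Countable

/-- Membership in `S_Φ(X, x₀)`: a countable multiset whose points `s_i` satisfy
`(d(x₀, s_i))_i ∈ ℓ_Φ`. -/
def MemSPhi (Φ : SymmetricNorm) (x0 : X) (S : X → ℕ∞) : Prop :=
  IsCMultiset x0 S ∧ ∃ s : ℕ → X, IsEnum x0 S s ∧ MemLPhi Φ fun i => dist x0 (s i)

/-- The distance `d_Φ(S, T)`: the infimum over pairs of enumerations `(s_i), (t_i)`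
of `S, T` of `Φ(d(s_1,t_1), d(s_2,t_2), …)`. -/
noncomputable def dPhi (Φ : SymmetricNorm) (x0 : X) (S T : X → ℕ∞) : ℝ :=
  sInf {r | ∃ s t : ℕ → X, IsEnum x0 S s ∧ IsEnum x0 T t ∧
    MemLPhi Φ (fun i => dist (s i) (t i)) ∧ r = Φ.ext fun i => dist (s i) (t i)}

/-- The sum of two multisets (addition of multiplicities away from the basepoint). -/
noncomputable def msum (x0 : X) (S T : X → ℕ∞) : X → ℕ∞ := fun x => if x = x0 then ⊤ else S x + T x

/-- The difference of two multisets (subtraction of multiplicities away from the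
basepoint). -/
noncomputable def mdiff (x0 : X) (S T : X → ℕ∞) : X → ℕ∞ := fun x => if x = x0 then ⊤ else S x - T x

/-- The intersection of a multiset with a subset `V ⊆ X`. -/
noncomputable def minter (x0 : X) (S : X → ℕ∞) (V : Set X) : X → ℕ∞ :=
  fun x => if x = x0 then ⊤ else if x ∈ V then S x else 0

/-- The multiset `S` has rank `n`: its total multiplicity away from the basepoint
is `n`, i.e. its non-basepoint part can be listed by a tuple of length `n`. -/
def HasRank (x0 : X) (S : X → ℕ∞) (n : ℕ) : Prop :=
  ∃ f : Fin n → X, (∀ i, f i ≠ x0) ∧ ∀ x, x ≠ x0 → S x = {i : Fin n | f i = x}.encard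
section PhiBasic

variable (Φ : SymmetricNorm)

lemma phi_zero : Φ.toFun 0 = 0 := by
  have h := Φ.smul_eq 0 0
  simpa using h

lemma sum_single_apply (ξ : ℕ → ℝ) (G : Finset ℕ) (j : ℕ) :
    (∑ k ∈ G, Finsupp.single k (ξ k)) j = if j ∈ G then ξ j else 0 := by
  classical
  rw [Finsupp.finset_sum_apply]
  simp [Finsupp.single_apply]

lemma truncF_apply (ξ : ℕ → ℝ) (n : ℕ) (k : ℕ) :
    truncF ξ n k = if k < n then ξ k else 0 := by
  rw [truncF, sum_single_apply]
  simp

lemma phi_congr_abs (ξ η : ℕ →₀ ℝ) (h : ∀ k, |ξ k| = |η k|) : Φ.toFun ξ = Φ.toFun η := by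
  rw [← Φ.abs_invariant ξ, ← Φ.abs_invariant η]
  congr 1
  ext k
  simp only [Finsupp.mapRange_apply]
  exact h k

lemma phi_scale_coord (η : ℕ →₀ ℝ) (i : ℕ) (t : ℝ) (ht : |t| ≤ 1) :
    Φ.toFun (η + Finsupp.single i ((t - 1) * η i)) ≤ Φ.toFun η := by
  have ht1 : -1 ≤ t := neg_le_of_abs_le ht
  have ht2 : t ≤ 1 := le_of_abs_le ht
  set ν : ℕ →₀ ℝ := η - (2 : ℝ) • Finsupp.single i (η i) with hν
  have hνapp : ∀ k, ν k = if k = i then -η k else η k := by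
    intro k
    simp only [hν, Finsupp.sub_apply, Finsupp.smul_apply, Finsupp.single_apply, smul_eq_mul]
    by_cases hk : i = k
    · subst hk; simp; ring
    · simp [hk, Ne.symm hk]
  have hνphi : Φ.toFun ν = Φ.toFun η := by
    apply phi_congr_abs
    intro k
    rw [hνapp k]
    by_cases hk : k = i <;> simp [hk]
  have hdecomp : η + Finsupp.single i ((t - 1) * η i)
      = ((1 + t) / 2) • η + ((1 - t) / 2) • ν := by
    ext k
    simp only [Finsupp.add_apply, Finsupp.smul_apply, smul_eq_mul, Finsupp.single_apply]
    rw [hνapp k]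
    by_cases hk : k = i
    · subst hk; simp; ring
    · simp only [hk, if_false]
      rw [if_neg (Ne.symm hk)]
      ring
  rw [hdecomp]
  calc Φ.toFun (((1 + t) / 2) • η + ((1 - t) / 2) • ν)
      ≤ Φ.toFun (((1 + t) / 2) • η) + Φ.toFun (((1 - t) / 2) • ν) := Φ.add_le _ _
    _ = |(1 + t) / 2| * Φ.toFun η + |(1 - t) / 2| * Φ.toFun ν := by rw [Φ.smul_eq, Φ.smul_eq]
    _ = ((1 + t) / 2) * Φ.toFun η + ((1 - t) / 2) * Φ.toFun η := by
        rw [hνphi, abs_of_nonneg (by linarith), abs_of_nonneg (by linarith)]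
    _ = Φ.toFun η := by ring

lemma phi_mono_aux : ∀ (s : Finset ℕ) (ξ η : ℕ →₀ ℝ), (∀ k, k ∉ s → ξ k = η k) →
    (∀ k, |ξ k| ≤ |η k|) → Φ.toFun ξ ≤ Φ.toFun η := by
  classical
  intro s
  induction s using Finset.induction_on with
  | empty =>
    intro ξ η hout _
    have : ξ = η := Finsupp.ext fun k => hout k (Finset.notMem_empty k)
    rw [this]
  | insert _ _ hi =>
    rename_i i s ih
    intro ξ η hout habs
    by_cases hzero : η i = 0
    · have hξi : ξ i = 0 := by
        have := habs i
        rw [hzero, abs_zero] at this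
        exact abs_nonpos_iff.mp this
      apply ih ξ η ?_ habs
      intro k hk
      by_cases hki : k = i
      · subst hki; rw [hξi, hzero]
      · exact hout k (by simp [hki, hk])
    · set t : ℝ := ξ i / η i with htdef
      have ht : |t| ≤ 1 := by
        rw [htdef, abs_div]
        rw [div_le_one (abs_pos.mpr hzero)]
        exact habs i
      have hti : (t - 1) * η i = ξ i - η i := by
        rw [htdef, sub_mul, div_mul_cancel₀ _ hzero, one_mul]
      set η' : ℕ →₀ ℝ := η + Finsupp.single i ((t - 1) * η i) with hη'
      have hη'app : ∀ k, η' k = if k = i then ξ k else η k := by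
        intro k
        simp only [hη', Finsupp.add_apply, Finsupp.single_apply, hti]
        by_cases hk : k = i
        · subst hk; simp
        · rw [if_neg (fun h => hk h.symm), if_neg hk, add_zero]
      have h1 : Φ.toFun η' ≤ Φ.toFun η := phi_scale_coord Φ η i t ht
      have h2 : Φ.toFun ξ ≤ Φ.toFun η' := by
        apply ih ξ η'
        · intro k hk
          rw [hη'app k]
          by_cases hki : k = i
          · simp [hki]
          · rw [if_neg hki]; exact hout k (by simp [hki, hk])
        · intro k
          rw [hη'app k]
          by_cases hki : k = i
          · simp [hki]
          · rw [if_neg hki]; exact habs k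
      exact le_trans h2 h1

lemma phi_mono (ξ η : ℕ →₀ ℝ) (h : ∀ k, |ξ k| ≤ |η k|) : Φ.toFun ξ ≤ Φ.toFun η := by
  classical
  apply phi_mono_aux Φ (ξ.support ∪ η.support) ξ η ?_ h
  intro k hk
  simp only [Finset.mem_union, Finsupp.mem_support_iff, not_or, not_not] at hk
  rw [hk.1, hk.2]

lemma phi_trunc_mono (ξ : ℕ → ℝ) : Monotone fun n => Φ.toFun (truncF ξ n) := by
  intro n m hnm
  apply phi_mono
  intro k
  rw [truncF_apply, truncF_apply]
  by_cases hk : k < n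
  · rw [if_pos hk, if_pos (lt_of_lt_of_le hk hnm)]
  · rw [if_neg hk, abs_zero]
    exact abs_nonneg _

lemma phi_single (i : ℕ) (c : ℝ) : Φ.toFun (Finsupp.single i c) = |c| := by
  have h1 : Finsupp.single i c = c • Finsupp.single i (1 : ℝ) := by
    rw [Finsupp.smul_single, smul_eq_mul, mul_one]
  have h2 : Finsupp.equivMapDomain (Equiv.swap 0 i) (Finsupp.single 0 (1 : ℝ))
      = Finsupp.single i 1 := by
    rw [Finsupp.equivMapDomain_single, Equiv.swap_apply_left]
  rw [h1, Φ.smul_eq, ← h2, Φ.perm_invariant, Φ.norm_single, mul_one]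

lemma extend_perm : ∀ (s : Finset ℕ) (f : ℕ → ℕ), Set.InjOn f s →
    ∃ π : Equiv.Perm ℕ, ∀ i ∈ s, π i = f i := by
  classical
  intro s
  induction s using Finset.induction_on with
  | empty => exact fun f _ => ⟨1, by simp⟩
  | insert _ _ hi =>
    rename_i a s ih
    intro f hf
    obtain ⟨π', hπ'⟩ := ih f (hf.mono (by simp [Finset.coe_insert, Set.subset_insert]))
    refine ⟨π'.trans (Equiv.swap (π' a) (f a)), ?_⟩
    intro j hj
    rcases Finset.mem_insert.mp hj with rfl | hjs
    · simp [Equiv.trans_apply, Equiv.swap_apply_left]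
    · have h1 : π' j = f j := hπ' j hjs
      have hja : j ≠ a := fun h => hi (h ▸ hjs)
      have h2 : f j ≠ f a := fun h =>
        hja (hf (Finset.mem_insert.mpr (Or.inr hjs)) (Finset.mem_insert_self a _) h)
      have h3 : f j ≠ π' a := by
        rw [← h1]; exact fun h => hja (π'.injective h)
      simp only [Equiv.trans_apply, h1]
      rw [Equiv.swap_apply_of_ne_of_ne h3 h2]

end PhiBasic

section PhiExt

variable (Φ : SymmetricNorm)

lemma truncF_zero (n : ℕ) : truncF (fun _ => (0 : ℝ)) n = 0 := by
  ext k
  rw [truncF_apply]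
  simp

lemma memLPhi_zero : MemLPhi Φ (fun _ => 0) := by
  refine ⟨tendsto_const_nhds, 0, ?_⟩
  have : (fun n => Φ.toFun (truncF (fun _ => (0:ℝ)) n)) = fun _ => 0 := by
    funext n; rw [truncF_zero, phi_zero]
  rw [this]
  exact tendsto_const_nhds

lemma ext_eq_of_tendsto {ξ : ℕ → ℝ} {L : ℝ}
    (h : Tendsto (fun n => Φ.toFun (truncF ξ n)) atTop (nhds L)) : Φ.ext ξ = L :=
  h.limUnder_eq

lemma ext_zero : Φ.ext (fun _ => 0) = 0 := by
  apply ext_eq_of_tendsto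
  have : (fun n => Φ.toFun (truncF (fun _ => (0:ℝ)) n)) = fun _ => 0 := by
    funext n; rw [truncF_zero, phi_zero]
  rw [this]
  exact tendsto_const_nhds

lemma MemLPhi.tendsto_ext {ξ : ℕ → ℝ} (h : MemLPhi Φ ξ) :
    Tendsto (fun n => Φ.toFun (truncF ξ n)) atTop (nhds (Φ.ext ξ)) := by
  obtain ⟨_, L, hL⟩ := h
  rwa [ext_eq_of_tendsto Φ hL]

lemma trunc_le_ext {ξ : ℕ → ℝ} (h : MemLPhi Φ ξ) (n : ℕ) :
    Φ.toFun (truncF ξ n) ≤ Φ.ext ξ :=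
  Monotone.ge_of_tendsto (phi_trunc_mono Φ ξ) (h.tendsto_ext Φ) n

lemma ext_nonneg {ξ : ℕ → ℝ} (h : MemLPhi Φ ξ) : 0 ≤ Φ.ext ξ :=
  ge_of_tendsto' (h.tendsto_ext Φ) fun n => Φ.nonneg _

lemma abs_le_ext {ξ : ℕ → ℝ} (h : MemLPhi Φ ξ) (i : ℕ) : |ξ i| ≤ Φ.ext ξ := by
  have h1 : |ξ i| = Φ.toFun (Finsupp.single i (ξ i)) := (phi_single Φ i (ξ i)).symm
  rw [h1]
  refine le_trans (phi_mono Φ _ _ fun k => ?_) (trunc_le_ext Φ h (i + 1))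
  rw [truncF_apply, Finsupp.single_apply]
  by_cases hk : i = k
  · subst hk; simp
  · rw [if_neg hk, abs_zero]
    exact abs_nonneg _

lemma memLPhi_of_bounded {ξ : ℕ → ℝ} (h0 : Tendsto ξ atTop (nhds 0)) (C : ℝ)
    (hC : ∀ n, Φ.toFun (truncF ξ n) ≤ C) : MemLPhi Φ ξ ∧ Φ.ext ξ ≤ C := by
  have hb : BddAbove (Set.range fun n => Φ.toFun (truncF ξ n)) := by
    refine ⟨C, ?_⟩
    rintro r ⟨n, rfl⟩
    exact hC n
  have ht := tendsto_atTop_ciSup (phi_trunc_mono Φ ξ) hb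
  refine ⟨⟨h0, _, ht⟩, ?_⟩
  rw [ext_eq_of_tendsto Φ ht]
  exact ciSup_le hC

lemma phi_reindex {ξ : ℕ → ℝ} (hξ : MemLPhi Φ ξ) (P : ℕ → Prop) (f : ℕ → ℕ)
    (hf : Set.InjOn f {n | P n}) :
    MemLPhi Φ (fun n => if P n then ξ (f n) else 0) ∧
      Φ.ext (fun n => if P n then ξ (f n) else 0) ≤ Φ.ext ξ := by
  classical
  set η : ℕ → ℝ := fun n => if P n then ξ (f n) else 0 with hη
  have h0 : Tendsto η atTop (nhds 0) := by
    rw [← Nat.cofinite_eq_atTop]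
    have h1 := hξ.1
    rw [← Nat.cofinite_eq_atTop] at h1
    intro U hU
    have hK : {m | ξ m ∈ U}ᶜ.Finite := h1 hU
    rw [Filter.mem_map, Filter.mem_cofinite]
    have hsub : (η ⁻¹' U)ᶜ ⊆ {n | P n ∧ f n ∈ {m | ξ m ∈ U}ᶜ} := by
      intro n hn
      simp only [Set.mem_compl_iff, Set.mem_preimage] at hn
      by_cases hP : P n
      · refine ⟨hP, ?_⟩
        simp only [Set.mem_compl_iff, Set.mem_setOf_eq]
        intro hmem
        exact hn (by simp only [hη, hP, if_true]; exact hmem)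
      · exact absurd (show η n ∈ U by
          simp only [hη, hP, if_false]; exact mem_of_mem_nhds hU) hn
    refine Set.Finite.subset ?_ hsub
    apply Set.Finite.of_finite_image (f := f)
    · refine Set.Finite.subset hK ?_
      rintro m ⟨n, ⟨_, hn2⟩, rfl⟩
      exact hn2
    · exact hf.mono fun n hn => hn.1
  have hbound : ∀ n, Φ.toFun (truncF η n) ≤ Φ.ext ξ := by
    intro n
    set F : Finset ℕ := (Finset.range n).filter P with hF
    have heq1 : truncF η n = ∑ i ∈ F, Finsupp.single i (ξ (f i)) := by
      rw [truncF, hF, Finset.sum_filter]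
      apply Finset.sum_congr rfl
      intro i _
      by_cases hP : P i
      · rw [if_pos hP, hη]; simp [hP]
      · rw [if_neg hP, hη]; simp [hP]
    obtain ⟨π, hπ⟩ := extend_perm F f (hf.mono (by
      intro i hi
      rw [hF] at hi
      simp only [Finset.coe_filter, Set.mem_setOf_eq] at hi
      exact hi.2))
    have hinjF : Set.InjOn f F := hf.mono (by
      intro i hi
      rw [hF] at hi
      simp only [Finset.coe_filter, Set.mem_setOf_eq] at hi
      exact hi.2)
    have heq2 : Φ.toFun (∑ i ∈ F, Finsupp.single i (ξ (f i)))
        = Φ.toFun (∑ i ∈ F, Finsupp.single (f i) (ξ (f i))) := by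
      rw [← Φ.perm_invariant π (∑ i ∈ F, Finsupp.single i (ξ (f i)))]
      congr 1
      rw [Finsupp.equivMapDomain_eq_mapDomain, Finsupp.mapDomain_finset_sum]
      apply Finset.sum_congr rfl
      intro i hi
      rw [Finsupp.mapDomain_single, hπ i hi]
    have hinj' : ∀ x ∈ F, ∀ y ∈ F, f x = f y → x = y := fun x hx y hy h =>
      hinjF (by exact_mod_cast hx) (by exact_mod_cast hy) h
    have heq3 : ∑ i ∈ F, Finsupp.single (f i) (ξ (f i))
        = ∑ k ∈ F.image f, Finsupp.single k (ξ k) :=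
      (Finset.sum_image (f := fun k => (Finsupp.single k (ξ k) : ℕ →₀ ℝ)) hinj').symm
    set G : Finset ℕ := F.image f with hG
    set m : ℕ := (G.sup id) + 1 with hm
    have hGm : ∀ k ∈ G, k < m := by
      intro k hk
      rw [hm]
      exact Nat.lt_succ_of_le (Finset.le_sup (f := id) hk)
    have hle : Φ.toFun (∑ k ∈ G, Finsupp.single k (ξ k)) ≤ Φ.toFun (truncF ξ m) := by
      apply phi_mono
      intro k
      rw [sum_single_apply, truncF_apply]
      by_cases hk : k ∈ G
      · rw [if_pos hk, if_pos (hGm k hk)]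
      · rw [if_neg hk, abs_zero]
        exact abs_nonneg _
    calc Φ.toFun (truncF η n) = Φ.toFun (∑ i ∈ F, Finsupp.single i (ξ (f i))) := by rw [heq1]
      _ = Φ.toFun (∑ k ∈ G, Finsupp.single k (ξ k)) := by rw [heq2, heq3]
      _ ≤ Φ.toFun (truncF ξ m) := hle
      _ ≤ Φ.ext ξ := trunc_le_ext Φ hξ m
  exact memLPhi_of_bounded Φ h0 _ hbound

lemma phi_dom {ξ η ζ : ℕ → ℝ} (hξ : MemLPhi Φ ξ) (hη : MemLPhi Φ η)
    (hd : ∀ i, |ζ i| ≤ |ξ i| + |η i|) :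
    MemLPhi Φ ζ ∧ Φ.ext ζ ≤ Φ.ext ξ + Φ.ext η := by
  have h0 : Tendsto ζ atTop (nhds 0) := by
    apply squeeze_zero_norm (a := fun i => |ξ i| + |η i|)
      (fun n => by rw [Real.norm_eq_abs]; exact hd n)
      (by simpa using hξ.1.abs.add hη.1.abs)
  have hbound : ∀ n, Φ.toFun (truncF ζ n) ≤ Φ.ext ξ + Φ.ext η := by
    intro n
    have h1 : Φ.toFun (truncF ζ n) ≤ Φ.toFun (truncF (fun i => |ξ i| + |η i|) n) := by
      apply phi_mono
      intro k
      rw [truncF_apply, truncF_apply]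
      by_cases hk : k < n
      · rw [if_pos hk, if_pos hk]
        rw [abs_of_nonneg (show (0:ℝ) ≤ |ξ k| + |η k| by positivity)]
        exact hd k
      · rw [if_neg hk, if_neg hk]
    have h2 : truncF (fun i => |ξ i| + |η i|) n
        = truncF (fun i => |ξ i|) n + truncF (fun i => |η i|) n := by
      ext k
      rw [Finsupp.add_apply, truncF_apply, truncF_apply, truncF_apply]
      by_cases hk : k < n <;> simp [hk]
    have h3 : Φ.toFun (truncF (fun i => |ξ i|) n) = Φ.toFun (truncF ξ n) := by
      rw [← Φ.abs_invariant (truncF ξ n)]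
      congr 1
      ext k
      rw [Finsupp.mapRange_apply, truncF_apply, truncF_apply]
      by_cases hk : k < n <;> simp [hk]
    have h4 : Φ.toFun (truncF (fun i => |η i|) n) = Φ.toFun (truncF η n) := by
      rw [← Φ.abs_invariant (truncF η n)]
      congr 1
      ext k
      rw [Finsupp.mapRange_apply, truncF_apply, truncF_apply]
      by_cases hk : k < n <;> simp [hk]
    calc Φ.toFun (truncF ζ n) ≤ Φ.toFun (truncF (fun i => |ξ i| + |η i|) n) := h1
      _ ≤ Φ.toFun (truncF (fun i => |ξ i|) n) + Φ.toFun (truncF (fun i => |η i|) n) := by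
          rw [h2]; exact Φ.add_le _ _
      _ = Φ.toFun (truncF ξ n) + Φ.toFun (truncF η n) := by rw [h3, h4]
      _ ≤ Φ.ext ξ + Φ.ext η := add_le_add (trunc_le_ext Φ hξ n) (trunc_le_ext Φ hη n)
  exact memLPhi_of_bounded Φ h0 _ hbound

end PhiExt

section SetAux

lemma equiv_of_encard_eq {A B : Set ℕ} (h : A.encard = B.encard) : Nonempty (A ≃ B) := by
  classical
  by_cases hA : A.Finite
  · have hB : B.Finite := by
      by_contra hB
      rw [Set.Infinite.encard_eq hB] at h
      exact (Set.encard_ne_top_iff.mpr hA) h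
    haveI := hA.fintype
    haveI := hB.fintype
    have hc : Fintype.card A = Fintype.card B := by
      have h1 := Set.encard_eq_coe_toFinset_card A
      have h2 := Set.encard_eq_coe_toFinset_card B
      rw [h1, h2] at h
      have h3 := (Nat.cast_inj (R := ℕ∞)).mp h
      rwa [Set.toFinset_card, Set.toFinset_card] at h3
    exact ⟨Fintype.equivOfCardEq hc⟩
  · have hB : B.Infinite := by
      by_contra hB
      rw [Set.not_infinite] at hB
      rw [Set.Infinite.encard_eq hA] at h
      exact (Set.encard_ne_top_iff.mpr hB) h.symm
    haveI : Infinite A := Set.infinite_coe_iff.mpr hA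
    haveI : Infinite B := Set.infinite_coe_iff.mpr hB
    haveI := Nat.Subtype.denumerable A
    haveI := Nat.Subtype.denumerable B
    exact ⟨(Denumerable.eqv A).trans (Denumerable.eqv B).symm⟩

lemma encard_sum_fibers {X : Type*} (e : ℕ ≃ ℕ ⊕ ℕ) (g : ℕ ⊕ ℕ → X) (x : X) :
    {n | g (e n) = x}.encard
      = {i | g (Sum.inl i) = x}.encard + {j | g (Sum.inr j) = x}.encard := by
  have h1 : {n | g (e n) = x} = e.symm '' {m | g m = x} := by
    ext n
    simp only [Set.mem_setOf_eq, Set.mem_image]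
    constructor
    · intro h
      exact ⟨e n, h, e.symm_apply_apply n⟩
    · rintro ⟨m, hm, rfl⟩
      rwa [e.apply_symm_apply]
  have h2 : {m : ℕ ⊕ ℕ | g m = x}
      = Sum.inl '' {i | g (Sum.inl i) = x} ∪ Sum.inr '' {j | g (Sum.inr j) = x} := by
    ext m
    cases m with
    | inl i => simp
    | inr j => simp
  rw [h1, (e.symm.injective.injOn).encard_image, h2,
    Set.encard_union_eq (by
      rw [Set.disjoint_iff]
      rintro m ⟨⟨i, _, rfl⟩, ⟨j, _, hj⟩⟩
      exact Sum.inl_ne_inr hj.symm),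
    (Sum.inl_injective.injOn).encard_image,
    (Sum.inr_injective.injOn).encard_image]

end SetAux

section DPhiBasic

variable (Φ : SymmetricNorm) (x0 : X)

/-- The defining set of `dPhi`. -/
def dPhiSet (S T : X → ℕ∞) : Set ℝ :=
  {r | ∃ s t : ℕ → X, IsEnum x0 S s ∧ IsEnum x0 T t ∧
    MemLPhi Φ (fun i => dist (s i) (t i)) ∧ r = Φ.ext fun i => dist (s i) (t i)}

lemma dPhi_eq_sInf (S T : X → ℕ∞) : dPhi Φ x0 S T = sInf (dPhiSet Φ x0 S T) := rfl

lemma dPhiSet_nonneg (S T : X → ℕ∞) : ∀ r ∈ dPhiSet Φ x0 S T, 0 ≤ r := by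
  rintro r ⟨s, t, _, _, hmem, rfl⟩
  exact ext_nonneg Φ hmem

lemma dPhiSet_bddBelow (S T : X → ℕ∞) : BddBelow (dPhiSet Φ x0 S T) :=
  ⟨0, dPhiSet_nonneg Φ x0 S T⟩

lemma dPhiSet_nonempty {S T : X → ℕ∞} (hS : MemSPhi Φ x0 S) (hT : MemSPhi Φ x0 T) :
    (dPhiSet Φ x0 S T).Nonempty := by
  obtain ⟨s, hs, hls⟩ := hS.2
  obtain ⟨t, ht, hlt⟩ := hT.2
  have hd : ∀ i, |dist (s i) (t i)| ≤ |dist x0 (s i)| + |dist x0 (t i)| := by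
    intro i
    rw [abs_of_nonneg dist_nonneg, abs_of_nonneg dist_nonneg, abs_of_nonneg dist_nonneg]
    calc dist (s i) (t i) ≤ dist (s i) x0 + dist x0 (t i) := dist_triangle _ _ _
      _ = dist x0 (s i) + dist x0 (t i) := by rw [dist_comm]
  obtain ⟨hmem, _⟩ := phi_dom Φ hls hlt hd
  exact ⟨_, s, t, hs, ht, hmem, rfl⟩

lemma dPhi_nonneg {S T : X → ℕ∞} (hS : MemSPhi Φ x0 S) (hT : MemSPhi Φ x0 T) :
    0 ≤ dPhi Φ x0 S T :=
  le_csInf (dPhiSet_nonempty Φ x0 hS hT) (dPhiSet_nonneg Φ x0 S T)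

lemma dPhi_self {S : X → ℕ∞} (hS : MemSPhi Φ x0 S) : dPhi Φ x0 S S = 0 := by
  obtain ⟨s, hs, _⟩ := hS.2
  have hzero : (fun i => dist (s i) (s i)) = fun _ => (0 : ℝ) := by
    funext i; exact dist_self _
  have hmem : (0 : ℝ) ∈ dPhiSet Φ x0 S S := by
    refine ⟨s, s, hs, hs, ?_, ?_⟩
    · rw [hzero]; exact memLPhi_zero Φ
    · rw [hzero, ext_zero]
  refine le_antisymm (csInf_le (dPhiSet_bddBelow Φ x0 S S) hmem)
    (le_csInf ⟨0, hmem⟩ (dPhiSet_nonneg Φ x0 S S))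

lemma dPhi_comm (S T : X → ℕ∞) : dPhi Φ x0 S T = dPhi Φ x0 T S := by
  rw [dPhi_eq_sInf, dPhi_eq_sInf]
  congr 1
  ext r
  constructor
  · rintro ⟨s, t, hs, ht, hmem, rfl⟩
    have : (fun i => dist (t i) (s i)) = fun i => dist (s i) (t i) := by
      funext i; exact dist_comm _ _
    exact ⟨t, s, ht, hs, by rw [this]; exact hmem, by rw [this]⟩
  · rintro ⟨t, s, ht, hs, hmem, rfl⟩
    have : (fun i => dist (s i) (t i)) = fun i => dist (t i) (s i) := by
      funext i; exact dist_comm _ _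
    exact ⟨s, t, hs, ht, by rw [this]; exact hmem, by rw [this]⟩

end DPhiBasic

section Triangle

variable (Φ : SymmetricNorm) (x0 : X)

lemma dPhi_core {S U T : X → ℕ∞} (s u : ℕ → X) (hs : IsEnum x0 S s) (hu : IsEnum x0 U u)
    (h1 : MemLPhi Φ fun i => dist (s i) (u i))
    (u' t : ℕ → X) (hu' : IsEnum x0 U u') (ht : IsEnum x0 T t)
    (h2 : MemLPhi Φ fun j => dist (u' j) (t j)) :
    ∃ r ∈ dPhiSet Φ x0 S T,
      r ≤ Φ.ext (fun i => dist (s i) (u i)) + Φ.ext (fun j => dist (u' j) (t j)) := by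
  classical
  have key : ∀ x : X, x ≠ x0 → ∃ g : {i : ℕ | u i = x} → {j : ℕ | u' j = x},
      Function.Bijective g := by
    intro x hx
    have hcard : {i : ℕ | u i = x}.encard = {j : ℕ | u' j = x}.encard := by
      rw [← hu x hx, ← hu' x hx]
    obtain ⟨eq⟩ := equiv_of_encard_eq hcard
    exact ⟨eq, eq.bijective⟩
  choose E hE using key
  set σ : ℕ → ℕ := fun i => if h : u i = x0 then 0 else (E (u i) h ⟨i, rfl⟩).1 with hσ
  have σ_spec : ∀ (x : X) (hx : x ≠ x0) (i : ℕ) (hui : u i = x),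
      σ i = (E x hx ⟨i, hui⟩).1 := by
    intro x hx i hui
    subst hui
    rw [hσ]
    simp only [dif_neg hx]
  have σ_mapsto : ∀ i, u i ≠ x0 → u' (σ i) = u i := by
    intro i hi
    rw [σ_spec (u i) hi i rfl]
    exact (E (u i) hi ⟨i, rfl⟩).2
  have σ_inj : ∀ i i', u i ≠ x0 → u i' ≠ x0 → σ i = σ i' → i = i' := by
    intro i i' hi hi' hσeq
    have hx : u i' = u i := by
      rw [← σ_mapsto i hi, ← σ_mapsto i' hi', hσeq]
    have ha := σ_spec (u i) hi i rfl
    have hb := σ_spec (u i) hi i' hx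
    rw [ha, hb] at hσeq
    have := (hE (u i) hi).1 (Subtype.ext hσeq)
    exact congrArg Subtype.val this
  have σ_surj : ∀ j, u' j ≠ x0 → ∃ i, u i = u' j ∧ σ i = j := by
    intro j hj
    obtain ⟨⟨i, hui⟩, hEi⟩ := (hE (u' j) hj).2 ⟨j, rfl⟩
    refine ⟨i, hui, ?_⟩
    rw [σ_spec (u' j) hj i hui, hEi]
  set e : ℕ ≃ ℕ ⊕ ℕ := Equiv.natSumNatEquivNat.symm with he
  set gs : ℕ ⊕ ℕ → X := Sum.elim s (fun _ => x0) with hgs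
  set gt : ℕ ⊕ ℕ → X := Sum.elim (fun i => if u i = x0 then x0 else t (σ i))
      (fun j => if u' j = x0 then t j else x0) with hgt
  set s' : ℕ → X := fun n => gs (e n) with hs'def
  set t' : ℕ → X := fun n => gt (e n) with ht'def
  -- s' enumerates S
  have hs' : IsEnum x0 S s' := by
    intro x hx
    have hsum := encard_sum_fibers e gs x
    have h2' : {j : ℕ | gs (Sum.inr j) = x} = (∅ : Set ℕ) := by
      ext j
      simp [hgs, Ne.symm hx]
    have h1' : {i : ℕ | gs (Sum.inl i) = x} = {i | s i = x} := by
      ext i; simp [hgs]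
    rw [show {n | s' n = x} = {n | gs (e n) = x} from rfl, hsum, h1', h2',
      Set.encard_empty, add_zero] at *
    rw [hs x hx]
  -- t' enumerates T
  have ht' : IsEnum x0 T t' := by
    intro x hx
    have hsum := encard_sum_fibers e gt x
    have hfirst : {i : ℕ | gt (Sum.inl i) = x} = {i | u i ≠ x0 ∧ t (σ i) = x} := by
      ext i
      simp only [hgt, Sum.elim_inl, Set.mem_setOf_eq]
      by_cases hui : u i = x0
      · simp [hui, Ne.symm hx]
      · simp [hui]
    have hsecond : {j : ℕ | gt (Sum.inr j) = x} = {j | u' j = x0 ∧ t j = x} := by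
      ext j
      simp only [hgt, Sum.elim_inr, Set.mem_setOf_eq]
      by_cases hj : u' j = x0
      · simp [hj]
      · simp [hj, Ne.symm hx]
    have himg : σ '' {i | u i ≠ x0 ∧ t (σ i) = x} = {j | u' j ≠ x0 ∧ t j = x} := by
      ext j
      constructor
      · rintro ⟨i, ⟨hi, hti⟩, rfl⟩
        exact ⟨by rw [σ_mapsto i hi]; exact hi, hti⟩
      · rintro ⟨hj, htj⟩
        obtain ⟨i, hui, hσi⟩ := σ_surj j hj
        have hi : u i ≠ x0 := by rw [hui]; exact hj
        exact ⟨i, ⟨hi, by rw [hσi]; exact htj⟩, hσi⟩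
    have hinj : Set.InjOn σ {i | u i ≠ x0 ∧ t (σ i) = x} :=
      fun i hi i' hi' h => σ_inj i i' hi.1 hi'.1 h
    have hcard1 : {i : ℕ | u i ≠ x0 ∧ t (σ i) = x}.encard
        = {j | u' j ≠ x0 ∧ t j = x}.encard := by
      rw [← himg]
      exact hinj.encard_image.symm
    have hunion : {j : ℕ | u' j ≠ x0 ∧ t j = x} ∪ {j | u' j = x0 ∧ t j = x}
        = {j | t j = x} := by
      ext j; by_cases hj : u' j = x0 <;> simp [hj]
    have hdisj : Disjoint {j : ℕ | u' j ≠ x0 ∧ t j = x} {j | u' j = x0 ∧ t j = x} := by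
      rw [Set.disjoint_iff]
      rintro j ⟨⟨hj1, _⟩, hj2, _⟩
      exact hj1 hj2
    rw [show {n | t' n = x} = {n | gt (e n) = x} from rfl, hsum, hfirst, hsecond, hcard1,
      ht x hx, ← hunion, Set.encard_union_eq hdisj]
  -- the two reindexed distance sequences
  set P1 : ℕ → Prop := fun n => (e n).isLeft = true with hP1
  set f1 : ℕ → ℕ := fun n => Sum.elim id id (e n) with hf1
  have hinj1 : Set.InjOn f1 {n | P1 n} := by
    intro n hn n' hn' heq
    simp only [hP1, Set.mem_setOf_eq, Sum.isLeft_iff] at hn hn'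
    obtain ⟨i, hi⟩ := hn
    obtain ⟨i', hi'⟩ := hn'
    simp only [hf1, hi, hi', Sum.elim_inl, id_eq] at heq
    apply e.injective
    rw [hi, hi', heq]
  set P2 : ℕ → Prop := fun n => Sum.elim (fun i => u i ≠ x0) (fun j => u' j = x0) (e n) with hP2
  set f2 : ℕ → ℕ := fun n => Sum.elim σ id (e n) with hf2
  have hinj2 : Set.InjOn f2 {n | P2 n} := by
    intro n hn n' hn' heq
    simp only [hP2, Set.mem_setOf_eq] at hn hn'
    simp only [hf2] at heq
    apply e.injective
    cases h : e n with
    | inl i =>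
      rw [h] at hn heq
      simp only [Sum.elim_inl] at hn heq
      cases h' : e n' with
      | inl i' =>
        rw [h'] at hn' heq
        simp only [Sum.elim_inl] at hn' heq
        exact congrArg Sum.inl (σ_inj i i' hn hn' heq)
      | inr j' =>
        rw [h'] at hn' heq
        simp only [Sum.elim_inr, id_eq] at hn' heq
        exfalso
        apply hn
        rw [← σ_mapsto i hn, heq]
        exact hn'
    | inr j =>
      rw [h] at hn heq
      simp only [Sum.elim_inr, id_eq] at hn heq
      cases h' : e n' with
      | inl i' =>
        rw [h'] at hn' heq
        simp only [Sum.elim_inl] at hn' heq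
        exfalso
        apply hn'
        rw [← σ_mapsto i' hn', ← heq]
        exact hn
      | inr j' =>
        rw [h'] at hn' heq
        simp only [Sum.elim_inr, id_eq] at hn' heq
        exact congrArg Sum.inr heq
  obtain ⟨hαmem, hαle⟩ := phi_reindex Φ h1 P1 f1 hinj1
  obtain ⟨hβmem, hβle⟩ := phi_reindex Φ h2 P2 f2 hinj2
  have hptw : ∀ n, |dist (s' n) (t' n)|
      ≤ |@ite ℝ (P1 n) (Classical.propDecidable _) (dist (s (f1 n)) (u (f1 n))) 0|
        + |@ite ℝ (P2 n) (Classical.propDecidable _) (dist (u' (f2 n)) (t (f2 n))) 0| := by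
    intro n
    rw [abs_of_nonneg dist_nonneg]
    have hcases : (∃ i, e n = Sum.inl i) ∨ (∃ j, e n = Sum.inr j) := by
      cases h : e n with
      | inl i => exact Or.inl ⟨i, rfl⟩
      | inr j => exact Or.inr ⟨j, rfl⟩
    rcases hcases with ⟨i, h⟩ | ⟨j, h⟩
    ·
      have hP1n : P1 n := by simp only [hP1, h]; rfl
      have hf1n : f1 n = i := by simp only [hf1, h, Sum.elim_inl, id_eq]
      have hs'n : s' n = s i := by simp only [hs'def, h, hgs, Sum.elim_inl]
      by_cases hui : u i = x0
      · have hP2n : ¬ P2 n := by simp only [hP2, h, Sum.elim_inl]; simp [hui]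
        have ht'n : t' n = x0 := by simp only [ht'def, h, hgt, Sum.elim_inl]; simp [hui]
        rw [hs'n, ht'n, if_pos hP1n, if_neg hP2n, hf1n]
        rw [abs_of_nonneg dist_nonneg, abs_zero, add_zero, hui]
      · have hP2n : P2 n := by simp only [hP2, h, Sum.elim_inl]; exact hui
        have hf2n : f2 n = σ i := by simp only [hf2, h, Sum.elim_inl]
        have ht'n : t' n = t (σ i) := by
          simp only [ht'def, h, hgt, Sum.elim_inl]; simp [hui]
        rw [hs'n, ht'n, if_pos hP1n, if_pos hP2n, hf1n, hf2n]
        rw [abs_of_nonneg dist_nonneg, abs_of_nonneg dist_nonneg]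
        calc dist (s i) (t (σ i)) ≤ dist (s i) (u i) + dist (u i) (t (σ i)) :=
              dist_triangle _ _ _
          _ = dist (s i) (u i) + dist (u' (σ i)) (t (σ i)) := by rw [σ_mapsto i hui]
    ·
      have hP1n : ¬ P1 n := by simp only [hP1, h]; simp
      have hs'n : s' n = x0 := by simp only [hs'def, h, hgs, Sum.elim_inr]
      by_cases hj : u' j = x0
      · have hP2n : P2 n := by simp only [hP2, h, Sum.elim_inr]; exact hj
        have hf2n : f2 n = j := by simp only [hf2, h, Sum.elim_inr, id_eq]
        have ht'n : t' n = t j := by simp only [ht'def, h, hgt, Sum.elim_inr]; simp [hj]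
        rw [hs'n, ht'n, if_neg hP1n, if_pos hP2n, hf2n]
        rw [abs_zero, zero_add, abs_of_nonneg dist_nonneg, ← hj]
      · have hP2n : ¬ P2 n := by simp only [hP2, h, Sum.elim_inr]; exact hj
        have ht'n : t' n = x0 := by simp only [ht'def, h, hgt, Sum.elim_inr]; simp [hj]
        rw [hs'n, ht'n, if_neg hP1n, if_neg hP2n]
        simp
  obtain ⟨hδmem, hδle⟩ := phi_dom Φ hαmem hβmem hptw
  refine ⟨Φ.ext fun n => dist (s' n) (t' n), ⟨s', t', hs', ht', hδmem, rfl⟩, ?_⟩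
  calc Φ.ext (fun n => dist (s' n) (t' n))
      ≤ Φ.ext (fun n => @ite ℝ (P1 n) (Classical.propDecidable _) (dist (s (f1 n)) (u (f1 n))) 0)
        + Φ.ext (fun n => @ite ℝ (P2 n) (Classical.propDecidable _)
            (dist (u' (f2 n)) (t (f2 n))) 0) := hδle
    _ ≤ Φ.ext (fun i => dist (s i) (u i)) + Φ.ext (fun j => dist (u' j) (t j)) :=
        add_le_add hαle hβle

lemma dPhi_triangle {S U T : X → ℕ∞} (hS : MemSPhi Φ x0 S) (hU : MemSPhi Φ x0 U)
    (hT : MemSPhi Φ x0 T) : dPhi Φ x0 S T ≤ dPhi Φ x0 S U + dPhi Φ x0 U T := by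
  have hne1 := dPhiSet_nonempty Φ x0 hS hU
  have hne2 := dPhiSet_nonempty Φ x0 hU hT
  have hkey : ∀ b ∈ dPhiSet Φ x0 S U, ∀ c ∈ dPhiSet Φ x0 U T, dPhi Φ x0 S T ≤ b + c := by
    rintro b ⟨s, u, hs, hu, hm1, rfl⟩ c ⟨u', t, hu', ht, hm2, rfl⟩
    obtain ⟨r, hr, hrle⟩ := dPhi_core Φ x0 s u hs hu hm1 u' t hu' ht hm2
    exact le_trans (csInf_le (dPhiSet_bddBelow Φ x0 S T) hr) hrle
  have h1 : ∀ b ∈ dPhiSet Φ x0 S U, dPhi Φ x0 S T - b ≤ sInf (dPhiSet Φ x0 U T) := by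
    intro b hb
    apply le_csInf hne2
    intro c hc
    have := hkey b hb c hc
    linarith
  have h2 : dPhi Φ x0 S T - sInf (dPhiSet Φ x0 U T) ≤ sInf (dPhiSet Φ x0 S U) := by
    apply le_csInf hne1
    intro b hb
    have := h1 b hb
    linarith
  rw [dPhi_eq_sInf Φ x0 S U, dPhi_eq_sInf Φ x0 U T]
  linarith

end Triangle

section Sep

variable (Φ : SymmetricNorm) (x0 : X)

lemma sep_const {T : X → ℕ∞} (hT : MemSPhi Φ x0 T) (x : X) (hx : x ≠ x0) :
    ∃ c > 0, ∀ t' : ℕ → X, IsEnum x0 T t' → ∀ j, t' j ≠ x → c ≤ dist x (t' j) := by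
  classical
  obtain ⟨t, htenum, htend, _⟩ := hT.2
  set ρ : ℝ := dist x x0 with hρ
  have hρpos : 0 < ρ := dist_pos.mpr hx
  have hFfin : {i : ℕ | ¬ dist x0 (t i) < ρ / 2}.Finite := by
    apply Filter.eventually_cofinite.mp
    rw [Nat.cofinite_eq_atTop]
    exact htend.eventually_lt_const (by linarith)
  set G : Finset ℕ := hFfin.toFinset.filter (fun i => t i ≠ x) with hG
  set c : ℝ := if hne : G.Nonempty then min (ρ/2) (G.inf' hne (fun i => dist x (t i)))
    else ρ/2 with hc
  have hcpos : 0 < c := by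
    rw [hc]
    split_ifs with hne
    · apply lt_min (by linarith)
      rw [Finset.lt_inf'_iff]
      intro i hi
      rw [hG, Finset.mem_filter] at hi
      exact dist_pos.mpr (Ne.symm hi.2)
    · linarith
  have hcle : c ≤ ρ/2 := by
    rw [hc]
    split_ifs with hne
    · exact min_le_left _ _
    · exact le_refl _
  refine ⟨c, hcpos, ?_⟩
  intro t' ht' j htj
  by_cases hj0 : t' j = x0
  · rw [hj0]
    calc c ≤ ρ/2 := hcle
      _ ≤ ρ := by linarith
      _ = dist x x0 := hρ
  · have hTj : T (t' j) ≠ 0 := by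
      rw [ht' (t' j) hj0, Set.encard_ne_zero]
      exact ⟨j, rfl⟩
    have hTt : {i : ℕ | t i = t' j}.Nonempty := by
      rw [← Set.encard_ne_zero, ← htenum (t' j) hj0]
      exact hTj
    obtain ⟨i, hi⟩ := hTt
    rw [← hi]
    by_cases hclose : dist x0 (t i) < ρ / 2
    · have htri : ρ ≤ dist x (t i) + dist (t i) x0 := by rw [hρ]; exact dist_triangle _ _ _
      have h2 : dist (t i) x0 = dist x0 (t i) := dist_comm _ _
      calc c ≤ ρ/2 := hcle
        _ ≤ dist x (t i) := by rw [h2] at htri; linarith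
    · have hiG : i ∈ G := by
        rw [hG, Finset.mem_filter, Set.Finite.mem_toFinset]
        exact ⟨hclose, by rw [hi]; exact htj⟩
      have hne : G.Nonempty := ⟨i, hiG⟩
      rw [hc, dif_pos hne]
      exact le_trans (min_le_right _ _) (Finset.inf'_le _ hiG)

lemma dPhi_pos_of_lt {S T : X → ℕ∞} (hS : MemSPhi Φ x0 S) (hT : MemSPhi Φ x0 T)
    (x : X) (hx : x ≠ x0) (hlt : T x < S x) :
    ∃ c > 0, ∀ r ∈ dPhiSet Φ x0 S T, c ≤ r := by
  obtain ⟨c, hcpos, hc⟩ := sep_const Φ x0 hT x hx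
  refine ⟨c, hcpos, ?_⟩
  rintro r ⟨s', t', hs', ht', hmem, rfl⟩
  have hex : ∃ i, s' i = x ∧ t' i ≠ x := by
    by_contra hno
    push_neg at hno
    have hsub : {i : ℕ | s' i = x} ⊆ {i | t' i = x} := fun i hi => hno i hi
    have hle := Set.encard_le_encard hsub
    rw [← hs' x hx, ← ht' x hx] at hle
    exact absurd hle (not_le.mpr hlt)
  obtain ⟨i, hsx, htx⟩ := hex
  have h1 : c ≤ dist (s' i) (t' i) := by
    have := hc t' ht' i htx
    rwa [← hsx] at this
  calc c ≤ dist (s' i) (t' i) := h1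
    _ ≤ |dist (s' i) (t' i)| := le_abs_self _
    _ ≤ Φ.ext (fun n => dist (s' n) (t' n)) := abs_le_ext Φ hmem i

end Sep

/-- The set `S_Φ(X, x₀)` of `Φ`-summable countable multisets in a based metric
space `(X, x₀)`, equipped with `d_Φ`, is a metric space. -/
theorem sPhi_metricSpace (x0 : X) (Φ : SymmetricNorm) :
    ∃ m : MetricSpace {S : X → ℕ∞ // MemSPhi Φ x0 S},
      ∀ S T : {S : X → ℕ∞ // MemSPhi Φ x0 S}, m.dist S T = dPhi Φ x0 S.1 T.1 := by
  refine ⟨{ dist := fun S T => dPhi Φ x0 S.1 T.1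
            dist_self := fun S => dPhi_self Φ x0 S.2
            dist_comm := fun S T => dPhi_comm Φ x0 S.1 T.1
            dist_triangle := fun S U T => dPhi_triangle Φ x0 S.2 U.2 T.2
            eq_of_dist_eq_zero := ?_ }, fun S T => rfl⟩
  intro S T h
  have h' : dPhi Φ x0 S.1 T.1 = 0 := h
  apply Subtype.ext
  funext x
  by_cases hx : x = x0
  · subst hx
    rw [S.2.1.1, T.2.1.1]
  · by_contra hne
    rcases lt_or_gt_of_ne hne with hlt | hlt
    · obtain ⟨c, hcpos, hc⟩ := dPhi_pos_of_lt Φ x0 T.2 S.2 x hx hlt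
      have hcle : c ≤ dPhi Φ x0 T.1 S.1 :=
        le_csInf (dPhiSet_nonempty Φ x0 T.2 S.2) hc
      rw [← dPhi_comm Φ x0 S.1 T.1, h'] at hcle
      linarith
    · obtain ⟨c, hcpos, hc⟩ := dPhi_pos_of_lt Φ x0 S.2 T.2 x hx hlt
      have hcle : c ≤ dPhi Φ x0 S.1 T.1 :=
        le_csInf (dPhiSet_nonempty Φ x0 S.2 T.2) hc
      rw [h'] at hcle
      linarith
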